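/- Let G be a brick (a 3-connected graph such that G − x − y has a perfect matching for every pair of distinct vertices x, y). Then every barrier of G consists of a single vertex. -/

import Mathlib

open SimpleGraph Set

universe u
variable {V : Type u}

/-- Number of odd components of a graph. -/
noncomputable def oddComps (G : SimpleGraph V) : ℕ :=
  Nat.card {c : G.ConnectedComponent // Odd (Nat.card c.supp)}

/-- `S` is a barrier of `G`: the number of odd components of `G − S` equals `|S|`. -/
def IsBarrier (G : SimpleGraph V) (S : Set V) : Prop :=
  oddComps (G.induce Sᶜ) = S.ncard

/-- `G` has a perfect matching. -/
def HasPM (G : SimpleGraph V) : Prop :=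
  ∃ M : Subgraph G, M.IsPerfectMatching

/-- `G` is matching covered. -/
def MatchingCovered (G : SimpleGraph V) : Prop :=
  G.Connected ∧ G.edgeSet.Nonempty ∧
    ∀ e ∈ G.edgeSet, ∃ M : Subgraph G, M.IsPerfectMatching ∧ e ∈ M.edgeSet

/-- An edge `e` of a matching covered graph `G` is removable. -/
def Removable (G : SimpleGraph V) (e : Sym2 V) : Prop :=
  e ∈ G.edgeSet ∧ MatchingCovered (G.deleteEdges {e})

/-- `G` is 3-connected. -/
def ThreeConnected (G : SimpleGraph V) : Prop :=
  4 ≤ Nat.card V ∧ ∀ S : Set V, S.ncard ≤ 2 → (G.induce Sᶜ).Connected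

/-- A brick. -/
def IsBrick (G : SimpleGraph V) : Prop :=
  ThreeConnected G ∧ ∀ x y : V, x ≠ y → HasPM (G.induce ({x, y} : Set V)ᶜ)

/-- neighbours outside `S` of vertices of `S`. -/
def Nbrs (G : SimpleGraph V) (S : Set V) : Set V :=
  {v | v ∉ S ∧ ∃ u ∈ S, G.Adj u v}

/-- factor-critical graph. -/
def FactorCritical (G : SimpleGraph V) : Prop :=
  ∀ v : V, HasPM (G.induce ({v} : Set V)ᶜ)

/-- `(U, W)` is a bipartition of `G`. -/
def IsBipartition (G : SimpleGraph V) (U W : Set V) : Prop :=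
  Disjoint U W ∧ U ∪ W = Set.univ ∧
    ∀ a b : V, G.Adj a b → (a ∈ U ∧ b ∈ W) ∨ (a ∈ W ∧ b ∈ U)


section Helpers

variable {W : Type*}

/-- Isomorphic graphs have the same number of odd components. -/
lemma oddComps_eq_of_iso {G : SimpleGraph V} {H : SimpleGraph W} (φ : G ≃g H) :
    oddComps G = oddComps H := by
  unfold oddComps
  apply Nat.card_congr
  refine Equiv.subtypeEquiv φ.connectedComponentEquiv (fun c => ?_)
  have : Nat.card c.supp = Nat.card (φ.connectedComponentEquiv c).supp := by
    apply Nat.card_congr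
    refine Equiv.subtypeEquiv φ.toEquiv (fun v => ?_)
    simp only [SimpleGraph.ConnectedComponent.mem_supp_iff,
      SimpleGraph.Iso.connectedComponentEquiv_apply]
    rw [← SimpleGraph.ConnectedComponent.iso_inv_image_comp_eq_iff_eq_map]
    simp
  rw [this]

/-- Easy direction of Tutte's theorem: a graph with a perfect matching has at most `|u|`
odd components after deleting `u`. -/
lemma oddComps_deleteVerts_le_of_hasPM [Finite V] {G : SimpleGraph V} (h : HasPM G)
    (u : Set V) :
    oddComps ((⊤ : G.Subgraph).deleteVerts u).coe ≤ u.ncard := by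
  classical
  obtain ⟨M, hM⟩ := h
  unfold oddComps
  rw [← Nat.card_coe_set_eq]
  choose w hw v hv1 hv2 using
    fun (c : {c : ((⊤ : G.Subgraph).deleteVerts u).coe.ConnectedComponent //
        Odd (Nat.card c.supp)}) =>
      SimpleGraph.ConnectedComponent.odd_matches_node_outside hM
        ⟨c.1, by rw [Set.mem_setOf_eq, ← Nat.card_coe_set_eq]; exact c.2⟩
  have hinj : Function.Injective (fun c => (⟨w c, hw c⟩ : u)) := by
    intro c1 c2 hc
    simp only [Subtype.mk.injEq] at hc
    obtain ⟨x, -, hxu⟩ := hM.1 (hM.2 (w c1))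
    have h1 : (v c1 : V) = (v c2 : V) := by
      have e1 := hxu _ ((hv1 c1).symm)
      have e2 := hxu _ ((hc ▸ (hv1 c2)).symm)
      rw [e1, e2]
    have : v c1 = v c2 := Subtype.ext h1
    have hc1 := hv2 c1
    have hc2 := hv2 c2
    rw [this] at hc1
    rw [SimpleGraph.ConnectedComponent.mem_supp_iff] at hc1 hc2
    exact Subtype.ext (hc1 ▸ hc2)
  exact Nat.card_le_card_of_injective _ hinj

end Helpers

/-- every barrier of a brick is a singleton. -/
theorem stmt4 [Fintype V] (G : SimpleGraph V) (hG : IsBrick G)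
    (B : Set V) (hBne : B.Nonempty) (hB : IsBarrier G B) :
    ∃ v : V, B = {v} := by
  classical
  by_contra hcon
  obtain ⟨a, ha⟩ := hBne
  have hex : ∃ b ∈ B, b ≠ a := by
    by_contra hn
    push_neg at hn
    exact hcon ⟨a, Set.eq_singleton_iff_unique_mem.mpr ⟨ha, hn⟩⟩
  obtain ⟨b, hb, hba⟩ := hex
  have hab : a ≠ b := fun h => hba h.symm
  have hPM : HasPM (G.induce ({a, b} : Set V)ᶜ) := hG.2 a b hab
  set u : Set ↥({a, b} : Set V)ᶜ := {v | (v : V) ∈ B} with hu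
  have hle := oddComps_deleteVerts_le_of_hasPM hPM u
  have hiso : ((⊤ : (G.induce ({a, b} : Set V)ᶜ).Subgraph).deleteVerts u).coe ≃g
      G.induce Bᶜ := by
    have hq : ∀ q : ↥Bᶜ, (q : V) ∈ ({a, b} : Set V)ᶜ := by
      intro q hmem
      simp only [Set.mem_insert_iff, Set.mem_singleton_iff] at hmem
      rcases hmem with h | h
      · exact q.2 (by rw [h]; exact ha)
      · exact q.2 (by rw [h]; exact hb)
    refine ⟨⟨fun p => ⟨p.1.1, fun hB' => p.2.2 hB'⟩,
      fun q => ⟨⟨q.1, hq q⟩, ⟨trivial, q.2⟩⟩, fun p => rfl, fun q => rfl⟩, ?_⟩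
    intro p q
    simp only [Equiv.coe_fn_mk, comap_adj, Function.Embedding.coe_subtype,
      SimpleGraph.Subgraph.coe_adj, SimpleGraph.Subgraph.deleteVerts_adj,
      SimpleGraph.Subgraph.verts_top, Set.mem_univ, true_and,
      SimpleGraph.Subgraph.top_adj]
    exact ⟨fun h => ⟨p.2.2, q.2.2, h⟩, fun h => h.2.2⟩
  have h1 : oddComps (G.induce Bᶜ) ≤ u.ncard := (oddComps_eq_of_iso hiso) ▸ hle
  have h2 : u.ncard = (B \ {a, b}).ncard := by
    rw [← Nat.card_coe_set_eq, ← Nat.card_coe_set_eq]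
    exact Nat.card_congr ⟨fun p => ⟨p.1.1, p.2, p.1.2⟩,
      fun q => ⟨⟨q.1, q.2.2⟩, q.2.1⟩, fun p => rfl, fun q => rfl⟩
  have hsub : ({a, b} : Set V) ⊆ B := by
    intro x hx
    simp only [Set.mem_insert_iff, Set.mem_singleton_iff] at hx
    rcases hx with rfl | rfl
    · exact ha
    · exact hb
  have h3 : (B \ {a, b}).ncard = B.ncard - 2 := by
    rw [Set.ncard_diff hsub, Set.ncard_pair hab]
  have h4 : 2 ≤ B.ncard := by
    have := Set.ncard_le_ncard hsub (Set.toFinite B)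
    rwa [Set.ncard_pair hab] at this
  have h5 : oddComps (G.induce Bᶜ) = B.ncard := hB
  omega
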